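/- Let n ≥ 2 and let T_1, …, T_n be independent and identically distributed exponential random variables with rate ε > 0. For each index i define m_i(i) := T_i and m_i(j) := T_j − 1 for j ≠ i, and set M_i := max_{1 ≤ j ≤ n} m_i(j). Say that the index i is deleted if there exist at least two distinct indices j with m_i(j) ≥ M_i − 1. Then with probability at least 1 − e^{−ε}, at least n − 1 of the n indices are deleted. -/

import Mathlib

open MeasureTheory ProbabilityTheory
open scoped Classical

/-- Memorylessness-style estimate: if `X` and `Y` are independent, `X ≥ 0` a.e., and `Y`
is exponential with rate `eps`, then `P[X + 1 < Y] = e^{-eps} ⬝ P[X < Y]`. -/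
lemma key_exp {Ω : Type} [MeasurableSpace Ω] (μ : Measure Ω) [IsProbabilityMeasure μ]
    (eps : ℝ) (X Y : Ω → ℝ) (hX : Measurable X) (hY : Measurable Y)
    (hind : IndepFun X Y μ) (hX0 : ∀ᵐ ω ∂μ, 0 ≤ X ω)
    (hexp : ∀ t : ℝ, 0 ≤ t → μ {ω | t < Y ω} = ENNReal.ofReal (Real.exp (-(eps * t)))) :
    μ {ω | X ω + 1 < Y ω} = ENNReal.ofReal (Real.exp (-eps)) * μ {ω | X ω < Y ω} := by
  set ν := μ.map X with hνdef
  set τ := μ.map Y with hτdef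
  have hmap : μ.map (fun ω => (X ω, Y ω)) = ν.prod τ :=
    (indepFun_iff_map_prod_eq_prod_map_map hX.aemeasurable hY.aemeasurable).mp hind
  have key : ∀ c : ℝ, μ {ω | X ω + c < Y ω} = ∫⁻ x, τ (Set.Ioi (x + c)) ∂ν := by
    intro c
    have hset : MeasurableSet {p : ℝ × ℝ | p.1 + c < p.2} :=
      measurableSet_lt (measurable_fst.add measurable_const) measurable_snd
    have h1 : {ω | X ω + c < Y ω} = (fun ω => (X ω, Y ω)) ⁻¹' {p : ℝ × ℝ | p.1 + c < p.2} := rfl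
    rw [h1, ← Measure.map_apply (hX.prodMk hY) hset, hmap, Measure.prod_apply hset]
    rfl
  have hτIoi : ∀ t : ℝ, 0 ≤ t → τ (Set.Ioi t) = ENNReal.ofReal (Real.exp (-(eps * t))) := by
    intro t ht
    rw [hτdef, Measure.map_apply hY measurableSet_Ioi]
    exact hexp t ht
  have hae : ∀ᵐ x ∂ν, 0 ≤ x := by
    rw [hνdef, MeasureTheory.ae_map_iff hX.aemeasurable measurableSet_Ici]
    exact hX0
  have h2 : ∫⁻ x, τ (Set.Ioi (x + 1)) ∂ν
      = ∫⁻ x, ENNReal.ofReal (Real.exp (-eps)) * τ (Set.Ioi x) ∂ν := by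
    refine lintegral_congr_ae ?_
    filter_upwards [hae] with x hx
    rw [hτIoi _ (by linarith), hτIoi _ hx, ← ENNReal.ofReal_mul (Real.exp_pos _).le,
      ← Real.exp_add]
    congr 2
    ring
  have h3 : ∫⁻ x, τ (Set.Ioi x) ∂ν = μ {ω | X ω < Y ω} := by
    have h := key 0
    simp only [add_zero] at h
    exact h.symm
  rw [key 1, h2, lintegral_const_mul' _ _ ENNReal.ofReal_ne_top, h3]

/-- (Elkin–Neiman deletion rule on the complete graph `K_n`.) Let
`n ≥ 2` and let `T 1, …, T n` be i.i.d. exponential random variables with rate `ε > 0`.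
For each index `i` set `m_i(i) = T i` and `m_i(j) = T j - 1` for `j ≠ i`, and let
`M_i = max_j m_i(j)`. The index `i` is deleted if at least two distinct indices `j`
satisfy `m_i(j) ≥ M_i - 1`. Then with probability at least `1 - e^{-ε}`, at least
`n - 1` of the `n` indices are deleted. -/
theorem stmt_15 {Ω : Type} [MeasurableSpace Ω] (μ : Measure Ω) [IsProbabilityMeasure μ]
    (eps : ℝ) (heps : 0 < eps) (n : ℕ) (hn : 2 ≤ n)
    (T : Fin n → Ω → ℝ)
    (hmeas : ∀ i, Measurable (T i))
    (hindep : iIndepFun T μ)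
    (hexp : ∀ i, ∀ t : ℝ, 0 ≤ t →
      μ {ω | t < T i ω} = ENNReal.ofReal (Real.exp (-(eps * t)))) :
    ENNReal.ofReal (1 - Real.exp (-eps)) ≤
      μ {ω | n - 1 ≤ (Finset.univ.filter fun i : Fin n =>
          ∃ j k : Fin n, j ≠ k ∧
            (⨆ l : Fin n, (if l = i then T i ω else T l ω - 1)) - 1 ≤
              (if j = i then T i ω else T j ω - 1) ∧
            (⨆ l : Fin n, (if l = i then T i ω else T l ω - 1)) - 1 ≤
              (if k = i then T i ω else T k ω - 1)).card} := by
  have hnne : Nonempty (Fin n) := ⟨⟨0, by omega⟩⟩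
  -- the erased index sets are nonempty
  have hers : ∀ a : Fin n, (Finset.univ.erase a).Nonempty := by
    intro a
    apply Finset.card_pos.mp
    rw [Finset.card_erase_of_mem (Finset.mem_univ a), Finset.card_univ, Fintype.card_fin]
    omega
  have hatt : ∀ a : Fin n, (Finset.univ.erase a).attach.Nonempty :=
    fun a => (hers a).attach
  -- X a = max of the other variables
  set X : Fin n → Ω → ℝ :=
    fun a ω => (Finset.univ.erase a).attach.sup' (hatt a) (fun b => T b.1 ω) with hXdef
  have hXmeas : ∀ a, Measurable (X a) := by
    intro a
    have h : X a = (Finset.univ.erase a).attach.sup' (hatt a) (fun b => T b.1) := by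
      ext ω
      rw [hXdef]
      rw [Finset.sup'_apply]
    rw [h]
    exact Finset.measurable_sup' _ (fun b _ => hmeas b.1)
  -- independence of X a and T a
  have hXT : ∀ a : Fin n, IndepFun (X a) (T a) μ := by
    intro a
    have h := hindep.indepFun_finset (Finset.univ.erase a) {a} (by simp) hmeas
    have hg1 : Measurable (fun v : (↥(Finset.univ.erase a)) → ℝ =>
        (Finset.univ.erase a).attach.sup' (hatt a) (fun b => v b)) := by
      have h2 := Finset.measurable_sup' (hatt a)
        (f := fun (b : ↥(Finset.univ.erase a)) (v : ↥(Finset.univ.erase a) → ℝ) => v b)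
        (fun b _ => measurable_pi_apply b)
      convert h2 using 1
      ext v
      rw [Finset.sup'_apply]
    have hg2 : Measurable (fun v : (↥({a} : Finset (Fin n))) → ℝ =>
        v ⟨a, Finset.mem_singleton_self a⟩) := measurable_pi_apply _
    exact h.comp hg1 hg2
  -- a.e. nonnegativity of each T (hence of X)
  have hTpos : ∀ b : Fin n, ∀ᵐ ω ∂μ, 0 < T b ω := by
    intro b
    have h1 : μ {ω | 0 < T b ω} = 1 := by
      rw [hexp b 0 le_rfl]
      simp
    have hms : MeasurableSet {ω | 0 < T b ω} := measurableSet_lt measurable_const (hmeas b)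
    rw [Filter.eventually_iff, mem_ae_iff]
    rw [measure_compl hms (measure_ne_top μ _), h1, measure_univ, tsub_self]
  have hX0 : ∀ a : Fin n, ∀ᵐ ω ∂μ, 0 ≤ X a ω := by
    intro a
    obtain ⟨b, hb⟩ := hers a
    filter_upwards [hTpos b] with ω hω
    calc (0 : ℝ) ≤ T b ω := hω.le
      _ ≤ X a ω := Finset.le_sup' (fun c => T c.1 ω) (Finset.mem_attach _ ⟨b, hb⟩)
  -- the key events
  set A : Fin n → Set Ω := fun a => {ω | X a ω + 1 < T a ω} with hAdef
  set B : Fin n → Set Ω := fun a => {ω | X a ω < T a ω} with hBdef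
  have hAeq : ∀ a, μ (A a) = ENNReal.ofReal (Real.exp (-eps)) * μ (B a) :=
    fun a => key_exp μ eps (X a) (T a) (hXmeas a) (hmeas a) (hXT a) (hX0 a) (hexp a)
  have hBmeas : ∀ a, MeasurableSet (B a) := fun a => measurableSet_lt (hXmeas a) (hmeas a)
  -- the events B a are pairwise disjoint
  have hBdisj : (↑(Finset.univ : Finset (Fin n)) : Set (Fin n)).PairwiseDisjoint B := by
    intro a _ b _ hab
    rw [Function.onFun, Set.disjoint_left]
    intro ω hωa hωb
    have h1 : T b ω ≤ X a ω :=
      Finset.le_sup' (fun c => T c.1 ω)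
        (Finset.mem_attach _ ⟨b, Finset.mem_erase.mpr ⟨(Ne.symm hab), Finset.mem_univ b⟩⟩)
    have h2 : T a ω ≤ X b ω :=
      Finset.le_sup' (fun c => T c.1 ω)
        (Finset.mem_attach _ ⟨a, Finset.mem_erase.mpr ⟨hab, Finset.mem_univ a⟩⟩)
    have hωa' : X a ω < T a ω := hωa
    have hωb' : X b ω < T b ω := hωb
    linarith
  have hsumB : ∑ a : Fin n, μ (B a) ≤ 1 := by
    rw [← measure_biUnion_finset hBdisj (fun a _ => hBmeas a)]
    exact (measure_mono (Set.subset_univ _)).trans_eq measure_univ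
  have hsumA : ∑ a : Fin n, μ (A a) ≤ ENNReal.ofReal (Real.exp (-eps)) := by
    calc ∑ a : Fin n, μ (A a)
        = ∑ a : Fin n, ENNReal.ofReal (Real.exp (-eps)) * μ (B a) := by
          exact Finset.sum_congr rfl fun a _ => hAeq a
      _ = ENNReal.ofReal (Real.exp (-eps)) * ∑ a : Fin n, μ (B a) := by
          rw [Finset.mul_sum]
      _ ≤ ENNReal.ofReal (Real.exp (-eps)) * 1 := by
          exact mul_le_mul_right hsumB _
      _ = ENNReal.ofReal (Real.exp (-eps)) := mul_one _
  have hUnion : μ (⋃ a : Fin n, A a) ≤ ENNReal.ofReal (Real.exp (-eps)) := by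
    refine le_trans (measure_iUnion_le A) ?_
    rw [tsum_fintype]
    exact hsumA
  -- deterministic part: on the complement of ⋃ A a, at least n - 1 indices are deleted
  have hsub : (⋃ a : Fin n, A a)ᶜ ⊆ {ω | n - 1 ≤ (Finset.univ.filter fun i : Fin n =>
      ∃ j k : Fin n, j ≠ k ∧
        (⨆ l : Fin n, (if l = i then T i ω else T l ω - 1)) - 1 ≤
          (if j = i then T i ω else T j ω - 1) ∧
        (⨆ l : Fin n, (if l = i then T i ω else T l ω - 1)) - 1 ≤
          (if k = i then T i ω else T k ω - 1)).card} := by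
    intro ω hω
    simp only [Set.mem_compl_iff, Set.mem_iUnion, not_exists] at hω
    have hω' : ∀ a : Fin n, T a ω ≤ X a ω + 1 := by
      intro a
      have := hω a
      rw [hAdef] at this
      simp only [Set.mem_setOf_eq, not_lt] at this
      exact this
    obtain ⟨a₀, -, ha₀⟩ := Finset.exists_max_image Finset.univ (fun c => T c ω)
      ⟨Classical.arbitrary (Fin n), Finset.mem_univ _⟩
    have hmax : ∀ c, T c ω ≤ T a₀ ω := fun c => ha₀ c (Finset.mem_univ c)
    -- there exists b ≠ a₀ with T a₀ ω - 1 ≤ T b ω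
    obtain ⟨b, -, hbe⟩ := Finset.exists_mem_eq_sup' (hatt a₀) (fun c => T c.1 ω)
    have hba₀ : (b : Fin n) ≠ a₀ := Finset.ne_of_mem_erase b.2
    have hbT : T a₀ ω - 1 ≤ T (b : Fin n) ω := by
      have h := hω' a₀
      have h2 : X a₀ ω = T (b : Fin n) ω := hbe
      rw [h2] at h
      linarith
    -- every i ≠ a₀ is deleted
    have hsubset : Finset.univ.erase a₀ ⊆ Finset.univ.filter (fun i : Fin n =>
        ∃ j k : Fin n, j ≠ k ∧
          (⨆ l : Fin n, (if l = i then T i ω else T l ω - 1)) - 1 ≤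
            (if j = i then T i ω else T j ω - 1) ∧
          (⨆ l : Fin n, (if l = i then T i ω else T l ω - 1)) - 1 ≤
            (if k = i then T i ω else T k ω - 1)) := by
      intro i hi
      have hia : i ≠ a₀ := Finset.ne_of_mem_erase hi
      rw [Finset.mem_filter]
      refine ⟨Finset.mem_univ i, ?_⟩
      set S := ⨆ l : Fin n, (if l = i then T i ω else T l ω - 1) with hS
      have hSle : S ≤ max (T i ω) (T a₀ ω - 1) := by
        apply ciSup_le
        intro l
        by_cases h : l = i
        · rw [if_pos h]
          exact le_max_left _ _
        · rw [if_neg h]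
          have := hmax l
          refine le_trans ?_ (le_max_right _ _)
          linarith
      have hSa₀ : S ≤ T a₀ ω := by
        refine hSle.trans (max_le (hmax i) (by linarith [hmax a₀]))
      by_cases hcase : T a₀ ω - 1 ≤ T i ω
      · -- take j = a₀, k = i
        refine ⟨a₀, i, Ne.symm hia, ?_, ?_⟩
        · rw [if_neg (Ne.symm hia)]
          linarith
        · rw [if_pos rfl]
          have : S ≤ T i ω := hSle.trans (max_le le_rfl hcase)
          linarith
      · -- take j = a₀, k = b
        push_neg at hcase
        have hbi : (b : Fin n) ≠ i := by
          intro h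
          rw [h] at hbT
          linarith
        have hSle' : S ≤ T a₀ ω - 1 := hSle.trans (max_le (by linarith) le_rfl)
        refine ⟨a₀, b, Ne.symm hba₀, ?_, ?_⟩
        · rw [if_neg (Ne.symm hia)]
          linarith
        · rw [if_neg hbi]
          linarith
    have hcard : n - 1 ≤ (Finset.univ.filter fun i : Fin n =>
        ∃ j k : Fin n, j ≠ k ∧
          (⨆ l : Fin n, (if l = i then T i ω else T l ω - 1)) - 1 ≤
            (if j = i then T i ω else T j ω - 1) ∧
          (⨆ l : Fin n, (if l = i then T i ω else T l ω - 1)) - 1 ≤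
            (if k = i then T i ω else T k ω - 1)).card := by
      have h1 := Finset.card_le_card hsubset
      rwa [Finset.card_erase_of_mem (Finset.mem_univ a₀), Finset.card_univ,
        Fintype.card_fin] at h1
    exact hcard
  -- put everything together
  have h1 : (1 : ENNReal) ≤ μ (⋃ a : Fin n, A a) + μ ((⋃ a : Fin n, A a)ᶜ) := by
    calc (1 : ENNReal) = μ Set.univ := measure_univ.symm
      _ = μ ((⋃ a : Fin n, A a) ∪ (⋃ a : Fin n, A a)ᶜ) := by rw [Set.union_compl_self]
      _ ≤ μ (⋃ a : Fin n, A a) + μ ((⋃ a : Fin n, A a)ᶜ) := measure_union_le _ _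
  have h2 : (1 : ENNReal) ≤ ENNReal.ofReal (Real.exp (-eps)) + μ {ω | n - 1 ≤
      (Finset.univ.filter fun i : Fin n =>
        ∃ j k : Fin n, j ≠ k ∧
          (⨆ l : Fin n, (if l = i then T i ω else T l ω - 1)) - 1 ≤
            (if j = i then T i ω else T j ω - 1) ∧
          (⨆ l : Fin n, (if l = i then T i ω else T l ω - 1)) - 1 ≤
            (if k = i then T i ω else T k ω - 1)).card} :=
    h1.trans (add_le_add hUnion (measure_mono hsub))
  rw [ENNReal.ofReal_sub 1 (Real.exp_pos _).le, ENNReal.ofReal_one]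
  rw [tsub_le_iff_right, add_comm]
  exact h2
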